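/- Let σ > 0, m > 0 and let φ : [0,T] → ℓ²(ℤ^N) be a twice continuously differentiable solution of the conservative DKG equation φ̈ − Δ_d φ + m φ − F(φ) = 0 whose initial energy satisfies H(0) ≤ 0, and suppose φ(t) ≠ 0 for all t ∈ [0,T]. Then the function μ(t) = ‖φ(t)‖²_{ℓ²} is twice continuously differentiable and satisfies the differential inequality μ″(t) μ(t) ≥ ((σ+2)/2) (μ′(t))² for all t ∈ [0,T]. -/

import Mathlib

noncomputable section

open scoped ENNReal InnerProductSpace

/-- The lattice `ℤ^N`. -/
abbrev ZLat (N : ℕ) := Fin N → ℤ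

/-- The space `ℓ²(ℤ^N)` of real square-summable sequences. -/
abbrev ellTwo (N : ℕ) := lp (fun _ : ZLat N => ℝ) 2

/-- The `κ`-th standard basis vector of `ℤ^N`. -/
def evec (N : ℕ) (κ : Fin N) : ZLat N := fun j => if j = κ then 1 else 0

lemma memℓp_shift {N : ℕ} (v : ZLat N) (φ : ellTwo N) :
    Memℓp (fun n => φ (n + v)) 2 := by
  have h2 : (0:ℝ) < (2 : ℝ≥0∞).toReal := by norm_num
  rw [memℓp_gen_iff h2]
  have h := (memℓp_gen_iff h2).mp (lp.memℓp φ)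
  exact ((Equiv.addRight v).summable_iff (f := fun n => ‖φ n‖ ^ (2:ℝ≥0∞).toReal)).2 h

/-- The shift operator `(S_v φ)_n = φ_{n+v}` on `ℓ²(ℤ^N)`. -/
def shiftOp {N : ℕ} (v : ZLat N) (φ : ellTwo N) : ellTwo N :=
  ⟨fun n => φ (n + v), memℓp_shift v φ⟩

/-- The forward difference operator `(∇⁺_κ φ)_n = φ_{n+e_κ} - φ_n`. -/
def fdiff {N : ℕ} (κ : Fin N) (φ : ellTwo N) : ellTwo N := shiftOp (evec N κ) φ - φ

/-- The discrete Laplacian on `ℓ²(ℤ^N)`: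
`(Δ_d φ)_n = Σ_κ (φ_{n+e_κ} + φ_{n-e_κ}) - 2N φ_n`. -/
def discLap {N : ℕ} (φ : ellTwo N) : ellTwo N :=
  (∑ κ : Fin N, (shiftOp (evec N κ) φ + shiftOp (-(evec N κ)) φ)) - ((2 * N : ℝ) • φ)

lemma memℓp_F {N : ℕ} (σ : ℝ) (hσ : 0 ≤ σ) (φ : ellTwo N) :
    Memℓp (fun n => |φ n| ^ (2 * σ) * φ n) 2 := by
  have h2 : (0:ℝ) < (2 : ℝ≥0∞).toReal := by norm_num
  rw [memℓp_gen_iff h2]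
  have hφ := (memℓp_gen_iff h2).mp (lp.memℓp φ)
  refine Summable.of_nonneg_of_le (fun n => Real.rpow_nonneg (norm_nonneg _) _)
    (f := fun n => (‖φ‖ ^ (2*σ)) ^ (2:ℝ≥0∞).toReal * ‖φ n‖ ^ (2:ℝ≥0∞).toReal) ?_ ?_
  · intro n
    have h1 : |φ n| ≤ ‖φ‖ := by
      simpa [Real.norm_eq_abs] using lp.norm_apply_le_norm (p := 2) (by norm_num) φ n
    have h0 : (0:ℝ) ≤ |φ n| := abs_nonneg _
    have hC : |φ n| ^ (2*σ) ≤ ‖φ‖ ^ (2*σ) := Real.rpow_le_rpow h0 h1 (by positivity)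
    have hb : ‖|φ n| ^ (2*σ) * φ n‖ ≤ ‖φ‖ ^ (2*σ) * ‖φ n‖ := by
      rw [norm_mul, Real.norm_eq_abs, abs_of_nonneg (Real.rpow_nonneg h0 _)]
      exact mul_le_mul_of_nonneg_right hC (norm_nonneg _)
    calc ‖|φ n| ^ (2*σ) * φ n‖ ^ (2:ℝ≥0∞).toReal
        ≤ (‖φ‖ ^ (2*σ) * ‖φ n‖) ^ (2:ℝ≥0∞).toReal :=
          Real.rpow_le_rpow (norm_nonneg _) hb (by norm_num)
      _ = (‖φ‖ ^ (2*σ)) ^ (2:ℝ≥0∞).toReal * ‖φ n‖ ^ (2:ℝ≥0∞).toReal :=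
          Real.mul_rpow (Real.rpow_nonneg (norm_nonneg _) _) (norm_nonneg _)
  · exact hφ.mul_left _

/-- The power-law nonlinearity `(F(φ))_n = |φ_n|^{2σ} φ_n` as a map on `ℓ²(ℤ^N)`. -/
def Fpow {N : ℕ} (σ : ℝ) (hσ : 0 ≤ σ) (φ : ellTwo N) : ellTwo N :=
  ⟨fun n => |φ n| ^ (2 * σ) * φ n, memℓp_F σ hσ φ⟩


lemma shift_apply {N : ℕ} (v : ZLat N) (φ : ellTwo N) (n : ZLat N) :
    (shiftOp v φ) n = φ (n + v) := rfl

lemma inner_real {N : ℕ} (f g : ellTwo N) : ⟪f, g⟫_ℝ = ∑' n, f n * g n := by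
  rw [lp.inner_eq_tsum]; simp [RCLike.inner_apply, mul_comm]

lemma inner_shift {N : ℕ} (v : ZLat N) (u w : ellTwo N) :
    ⟪shiftOp v u, w⟫_ℝ = ⟪u, shiftOp (-v) w⟫_ℝ := by
  rw [inner_real, inner_real]
  rw [← (Equiv.addRight v).tsum_eq (f := fun m => u m * (shiftOp (-v) w) m)]
  congr 1; funext n
  simp [shift_apply, add_assoc]

lemma shift_shift {N : ℕ} (a b : ZLat N) (u : ellTwo N) :
    shiftOp a (shiftOp b u) = shiftOp (a + b) u := by
  apply lp.ext; funext n; simp [shift_apply, add_assoc, add_comm a b]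

lemma inner_shift_shift {N : ℕ} (v : ZLat N) (u w : ellTwo N) :
    ⟪shiftOp v u, shiftOp v w⟫_ℝ = ⟪u, w⟫_ℝ := by
  rw [inner_shift, shift_shift]
  norm_num
  congr 1
  apply lp.ext; funext n; simp [shift_apply]

lemma shift_add {N : ℕ} (v : ZLat N) (u w : ellTwo N) :
    shiftOp v (u + w) = shiftOp v u + shiftOp v w := by
  apply lp.ext; funext n; simp [shift_apply, lp.coeFn_add]
lemma shift_smul {N : ℕ} (v : ZLat N) (c : ℝ) (u : ellTwo N) :
    shiftOp v (c • u) = c • shiftOp v u := by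
  apply lp.ext; funext n; simp [shift_apply, lp.coeFn_smul]
lemma shift_norm {N : ℕ} (v : ZLat N) (u : ellTwo N) : ‖shiftOp v u‖ = ‖u‖ := by
  have h := inner_shift_shift v u u
  rw [real_inner_self_eq_norm_sq, real_inner_self_eq_norm_sq] at h
  nlinarith [norm_nonneg (shiftOp v u), norm_nonneg u]

def shiftCLM {N : ℕ} (v : ZLat N) : ellTwo N →L[ℝ] ellTwo N :=
  LinearMap.mkContinuous
    { toFun := shiftOp v, map_add' := shift_add v, map_smul' := shift_smul v } 1
    (fun u => by show ‖shiftOp v u‖ ≤ _; rw [shift_norm, one_mul])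


lemma hasDerivAt_abs_rpow_mul_self {q : ℝ} (hq : 0 < q) (x : ℝ) :
    HasDerivAt (fun y : ℝ => |y| ^ q * y) ((q + 1) * |x| ^ q) x := by
  rcases eq_or_ne x 0 with rfl | hx
  · rw [hasDerivAt_iff_tendsto_slope]
    have h0 : (q + 1) * |(0:ℝ)| ^ q = 0 := by
      rw [abs_zero, Real.zero_rpow hq.ne', mul_zero]
    rw [h0]
    have hcont := ((Real.continuousAt_rpow_const |(0:ℝ)| q (Or.inr hq.le)).comp
        (continuous_abs.continuousAt (x := (0:ℝ)))).tendsto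
    have hcont2 : Filter.Tendsto (fun y : ℝ => |y| ^ q) (nhds 0) (nhds 0) := by
      simpa [Function.comp_def, Real.zero_rpow hq.ne'] using hcont
    apply (hcont2.mono_left nhdsWithin_le_nhds).congr'
    filter_upwards [self_mem_nhdsWithin] with y hy
    have hy' : y ≠ 0 := hy
    rw [slope_def_field]; field_simp; simp
  · have hx2 : (0:ℝ) < x ^ 2 := by positivity
    have hp : HasDerivAt (fun y : ℝ => y ^ 2) (2 * x) x := by
      simpa using hasDerivAt_pow 2 x
    have h1 : HasDerivAt (fun y : ℝ => (y ^ 2) ^ (q / 2))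
        (2 * x * (q / 2) * (x ^ 2) ^ (q / 2 - 1)) x :=
      hp.rpow_const (Or.inl hx2.ne')
    have h2 : HasDerivAt (fun y : ℝ => (y ^ 2) ^ (q / 2) * y)
        (2 * x * (q / 2) * (x ^ 2) ^ (q / 2 - 1) * x + (x ^ 2) ^ (q / 2) * 1) x :=
      h1.mul (hasDerivAt_id x)
    have habs : ∀ y : ℝ, (y ^ 2) ^ (q / 2) = |y| ^ q := by
      intro y
      rw [← sq_abs, ← Real.rpow_natCast |y| 2, ← Real.rpow_mul (abs_nonneg y)]
      congr 1
      push_cast; ring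
    have h3 : (x ^ 2 : ℝ) ^ (q / 2 - 1) * (x * x) = (x ^ 2) ^ (q / 2) := by
      have h4 := (Real.rpow_add hx2 (q / 2 - 1) 1).symm
      rw [Real.rpow_one] at h4
      rw [← sq x, h4]
      congr 1; ring
    have hkey : 2 * x * (q / 2) * (x ^ 2) ^ (q / 2 - 1) * x + (x ^ 2) ^ (q / 2) * 1
        = (q + 1) * |x| ^ q := by
      rw [← habs x, ← h3]; ring
    rw [← hkey]
    apply h2.congr_of_eventuallyEq
    filter_upwards with y using by rw [habs y]

lemma abs_le_add_of_mem_uIcc {a b x : ℝ} (hx : x ∈ Set.uIcc a b) : |x| ≤ |a| + |b| := by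
  rcases le_total a b with h | h
  · rw [Set.uIcc_of_le h] at hx
    calc |x| ≤ max |a| |b| := abs_le_max_abs_abs hx.1 hx.2
    _ ≤ |a| + |b| := max_le (le_add_of_nonneg_right (abs_nonneg _)) (le_add_of_nonneg_left (abs_nonneg _))
  · rw [Set.uIcc_of_ge h] at hx
    calc |x| ≤ max |b| |a| := abs_le_max_abs_abs hx.1 hx.2
    _ ≤ |a| + |b| := max_le (le_add_of_nonneg_left (abs_nonneg _)) (le_add_of_nonneg_right (abs_nonneg _))

/-- Lipschitz estimate for `g(y) = |y|^q y` on `[[a,b]]`. -/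
lemma abs_rpow_mul_self_sub_le {q : ℝ} (hq : 0 < q) (a b : ℝ) {x y : ℝ}
    (hx : x ∈ Set.uIcc a b) (hy : y ∈ Set.uIcc a b) :
    |(|y| ^ q * y) - (|x| ^ q * x)| ≤ (q + 1) * (|a| + |b|) ^ q * |y - x| := by
  have hconv : Convex ℝ (Set.uIcc a b) := convex_uIcc a b
  have := hconv.norm_image_sub_le_of_norm_hasDerivWithin_le
    (f := fun y : ℝ => |y| ^ q * y) (f' := fun x => (q + 1) * |x| ^ q)
    (C := (q + 1) * (|a| + |b|) ^ q)
    (fun z _ => (hasDerivAt_abs_rpow_mul_self hq z).hasDerivWithinAt) ?_ hx hy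
  · simpa [Real.norm_eq_abs] using this
  · intro z hz
    rw [Real.norm_eq_abs, abs_mul, abs_of_nonneg (by positivity : (0:ℝ) ≤ q + 1),
      abs_of_nonneg (Real.rpow_nonneg (abs_nonneg z) q)]
    exact mul_le_mul_of_nonneg_left
      (Real.rpow_le_rpow (abs_nonneg z) (abs_le_add_of_mem_uIcc hz) hq.le)
      (by positivity)

/-- Second-order Taylor estimate for `h(y) = |y|^(q+2)`. -/
lemma taylor_abs_rpow {q : ℝ} (hq : 0 < q) (a b : ℝ) :
    |(|b| ^ (q + 2) - |a| ^ (q + 2) - (q + 2) * (|a| ^ q * a) * (b - a))|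
      ≤ (q + 2) * (q + 1) * (|a| + |b|) ^ q * (b - a) ^ 2 := by
  set g : ℝ → ℝ := fun y => |y| ^ q * y with hg
  have hderiv : ∀ x : ℝ, HasDerivAt (fun y => g y * y - (q + 2) * g a * y)
      ((q + 2) * g x - (q + 2) * g a) x := by
    intro x
    have h1 : HasDerivAt (fun y => g y * y) ((q + 1) * |x| ^ q * x + g x * 1) x :=
      (hasDerivAt_abs_rpow_mul_self hq x).mul (hasDerivAt_id x)
    have h2 : HasDerivAt (fun y => (q + 2) * g a * y) ((q + 2) * g a) x := by
      simpa using (hasDerivAt_id x).const_mul ((q + 2) * g a)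
    have h3 := h1.sub h2
    have : (q + 1) * |x| ^ q * x + g x * 1 - (q + 2) * g a = (q + 2) * g x - (q + 2) * g a := by
      simp only [hg]; ring
    rwa [this] at h3
  have hconv : Convex ℝ (Set.uIcc a b) := convex_uIcc a b
  have hbound : ∀ x ∈ Set.uIcc a b,
      ‖(q + 2) * g x - (q + 2) * g a‖ ≤ (q + 2) * ((q + 1) * (|a| + |b|) ^ q * |b - a|) := by
    intro x hx
    rw [Real.norm_eq_abs, ← mul_sub, abs_mul, abs_of_nonneg (by positivity : (0:ℝ) ≤ q + 2)]
    refine mul_le_mul_of_nonneg_left ?_ (by positivity)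
    calc |g x - g a| ≤ (q + 1) * (|a| + |b|) ^ q * |x - a| :=
          abs_rpow_mul_self_sub_le hq a b Set.left_mem_uIcc hx
    _ ≤ (q + 1) * (|a| + |b|) ^ q * |b - a| := by
        refine mul_le_mul_of_nonneg_left ?_ (by positivity)
        simpa [abs_sub_comm] using Set.abs_sub_left_of_mem_uIcc hx
  have hmvt := hconv.norm_image_sub_le_of_norm_hasDerivWithin_le
    (f := fun y => g y * y - (q + 2) * g a * y)
    (f' := fun x => (q + 2) * g x - (q + 2) * g a)
    (fun z _ => (hderiv z).hasDerivWithinAt) hbound Set.left_mem_uIcc Set.right_mem_uIcc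
  have hgy : ∀ y : ℝ, g y * y = |y| ^ (q + 2) := by
    intro y
    rcases eq_or_ne y 0 with rfl | hy
    · simp [hg, Real.zero_rpow (by positivity : q + 2 ≠ 0)]
    · have hy' : (0:ℝ) < |y| := abs_pos.2 hy
      rw [hg]
      calc |y| ^ q * y * y = |y| ^ q * |y| ^ (2:ℝ) := by
            rw [mul_assoc, ← sq y, ← sq_abs y, Real.rpow_two]
      _ = |y| ^ (q + 2) := by rw [← Real.rpow_add hy']
  calc |(|b| ^ (q + 2) - |a| ^ (q + 2) - (q + 2) * (|a| ^ q * a) * (b - a))|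
      = ‖(g b * b - (q + 2) * g a * b) - (g a * a - (q + 2) * g a * a)‖ := by
        rw [Real.norm_eq_abs, hgy a, hgy b]; simp only [hg]; ring_nf
  _ ≤ (q + 2) * ((q + 1) * (|a| + |b|) ^ q * |b - a|) * ‖b - a‖ := hmvt
  _ = (q + 2) * (q + 1) * (|a| + |b|) ^ q * (b - a) ^ 2 := by
      have hsq : |b - a| ^ 2 = (b - a) ^ 2 := sq_abs _
      rw [Real.norm_eq_abs, ← hsq]; ring


lemma Fpow_apply {N : ℕ} (σ : ℝ) (hσ : 0 ≤ σ) (u : ellTwo N) (n : ZLat N) :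
    (Fpow σ hσ u) n = |u n| ^ (2 * σ) * u n := rfl

lemma abs_le_norm {N : ℕ} (u : ellTwo N) (n : ZLat N) : |u n| ≤ ‖u‖ := by
  simpa [Real.norm_eq_abs] using lp.norm_apply_le_norm (p := 2) (by norm_num) u n

lemma summable_mul {N : ℕ} (f g : ellTwo N) : Summable (fun n => f n * g n) := by
  simpa [RCLike.inner_apply, mul_comm] using lp.summable_inner (𝕜 := ℝ) f g

lemma abs_rpow_two_mul_self {q : ℝ} (hq : 0 < q) (y : ℝ) :
    |y| ^ q * y * y = |y| ^ (q + 2) := by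
  rcases eq_or_ne y 0 with rfl | hy
  · simp [Real.zero_rpow (by positivity : q + 2 ≠ 0)]
  · have hy' : (0:ℝ) < |y| := abs_pos.2 hy
    calc |y| ^ q * y * y = |y| ^ q * |y| ^ (2:ℝ) := by
          rw [mul_assoc, ← sq y, ← sq_abs y, Real.rpow_two]
    _ = |y| ^ (q + 2) := by rw [← Real.rpow_add hy']

lemma summable_P {N : ℕ} (σ : ℝ) (hσ : 0 < σ) (u : ellTwo N) :
    Summable (fun n => |u n| ^ (2 * σ + 2)) := by
  have h := summable_mul (Fpow σ hσ.le u) u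
  apply h.congr
  intro n
  rw [Fpow_apply]
  exact abs_rpow_two_mul_self (by positivity) (u n)

lemma inner_Fpow {N : ℕ} (σ : ℝ) (hσ : 0 < σ) (u : ellTwo N) :
    ⟪u, Fpow σ hσ.le u⟫_ℝ = ∑' n, |u n| ^ (2 * σ + 2) := by
  rw [inner_real]
  congr 1; funext n
  rw [Fpow_apply, ← abs_rpow_two_mul_self (by positivity : (0:ℝ) < 2 * σ) (u n)]
  ring

lemma tsum_sq_eq_norm_sq {N : ℕ} (w : ellTwo N) : ∑' n, (w n) ^ 2 = ‖w‖ ^ 2 := by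
  have h := real_inner_self_eq_norm_sq w
  rw [inner_real] at h
  rw [← h]
  congr 1; funext n; rw [sq]

/-- Key quadratic estimate for the potential functional. -/
lemma P_est {N : ℕ} (σ : ℝ) (hσ : 0 < σ) (u v : ellTwo N) :
    |(∑' n, |u n| ^ (2 * σ + 2)) - (∑' n, |v n| ^ (2 * σ + 2))
        - (2 * σ + 2) * ⟪Fpow σ hσ.le v, u - v⟫_ℝ|
      ≤ (2 * σ + 2) * (2 * σ + 1) * (‖u‖ + ‖v‖) ^ (2 * σ) * ‖u - v‖ ^ 2 := by
  have hq : (0:ℝ) < 2 * σ := by positivity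
  have hdn : ∀ n, (u - v) n = u n - v n := fun n => by rw [lp.coeFn_sub]; rfl
  set C : ℝ := (2 * σ + 2) * (2 * σ + 1) * (‖u‖ + ‖v‖) ^ (2 * σ) with hCdef
  have hCpos : 0 ≤ C := by rw [hCdef]; positivity
  set a : ZLat N → ℝ := fun n =>
    |u n| ^ (2 * σ + 2) - |v n| ^ (2 * σ + 2)
      - (2 * σ + 2) * ((Fpow σ hσ.le v) n * (u - v) n) with haa
  have hsu := summable_P σ hσ u
  have hsv := summable_P σ hσ v
  have hsi := summable_mul (Fpow σ hσ.le v) (u - v)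
  have hsa : Summable a := (hsu.sub hsv).sub (hsi.mul_left _)
  have hpt : ∀ n, |a n| ≤ C * (u n - v n) ^ 2 := by
    intro n
    have ht := taylor_abs_rpow hq (v n) (u n)
    have han : a n = |u n| ^ (2 * σ + 2) - |v n| ^ (2 * σ + 2)
        - (2 * σ + 2) * (|v n| ^ (2 * σ) * v n) * (u n - v n) := by
      simp only [haa, Fpow_apply, hdn]; ring
    rw [han]
    refine ht.trans ?_
    have h2 : (|v n| + |u n|) ^ (2 * σ) ≤ (‖u‖ + ‖v‖) ^ (2 * σ) := by
      apply Real.rpow_le_rpow (by positivity) ?_ hq.le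
      have h3 := abs_le_norm u n; have h4 := abs_le_norm v n
      linarith
    have h5 := mul_le_mul_of_nonneg_right h2 (sq_nonneg (u n - v n))
    have h6 := mul_le_mul_of_nonneg_left h5
      (by positivity : (0:ℝ) ≤ (2 * σ + 2) * (2 * σ + 1))
    rw [hCdef]
    nlinarith [h6]
  have hsd : Summable (fun n => (u n - v n) ^ 2) := by
    apply (summable_mul (u - v) (u - v)).congr
    intro n
    rw [hdn, sq]
  have hC : Summable (fun n => C * (u n - v n) ^ 2) := hsd.mul_left _
  have step1 : ∑' n, a n = (∑' n, |u n| ^ (2 * σ + 2)) - (∑' n, |v n| ^ (2 * σ + 2))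
      - (2 * σ + 2) * ⟪Fpow σ hσ.le v, u - v⟫_ℝ := by
    rw [inner_real, ← tsum_mul_left]
    rw [← Summable.tsum_sub hsu hsv, ← Summable.tsum_sub (hsu.sub hsv) (hsi.mul_left _)]
  rw [← step1]
  have habs : Summable (fun n => |a n|) := hsa.abs
  calc |∑' n, a n| ≤ ∑' n, |a n| := by
        have := norm_tsum_le_tsum_norm (f := a) (by simpa [Real.norm_eq_abs] using habs)
        simpa [Real.norm_eq_abs] using this
  _ ≤ ∑' n, C * (u n - v n) ^ 2 := Summable.tsum_le_tsum hpt habs hC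
  _ = C * ∑' n, (u n - v n) ^ 2 := tsum_mul_left
  _ = C * ‖u - v‖ ^ 2 := by
      rw [← tsum_sq_eq_norm_sq (u - v)]
      simp only [hdn]

lemma fdiff_inner_expand {N : ℕ} (κ : Fin N) (u w : ellTwo N) :
    ⟪fdiff κ u, fdiff κ w⟫_ℝ
      = 2 * ⟪u, w⟫_ℝ - (⟪shiftOp (evec N κ) u, w⟫_ℝ + ⟪u, shiftOp (evec N κ) w⟫_ℝ) := by
  unfold fdiff
  rw [inner_sub_left, inner_sub_right, inner_sub_right, inner_shift_shift]
  ring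

lemma inner_shift_neg {N : ℕ} (v : ZLat N) (u w : ellTwo N) :
    ⟪shiftOp (-v) u, w⟫_ℝ = ⟪u, shiftOp v w⟫_ℝ := by
  rw [inner_shift, neg_neg]

lemma inner_discLap {N : ℕ} (u w : ellTwo N) :
    ⟪discLap u, w⟫_ℝ
      = (∑ κ : Fin N, (⟪shiftOp (evec N κ) u, w⟫_ℝ + ⟪u, shiftOp (evec N κ) w⟫_ℝ))
        - 2 * N * ⟪u, w⟫_ℝ := by
  unfold discLap
  rw [inner_sub_left, sum_inner, real_inner_smul_left]
  congr 1
  exact Finset.sum_congr rfl fun κ _ => by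
    rw [inner_add_left, inner_shift_neg]

lemma sum_by_parts {N : ℕ} (u w : ellTwo N) :
    ∑ κ : Fin N, ⟪fdiff κ u, fdiff κ w⟫_ℝ = -⟪discLap u, w⟫_ℝ := by
  rw [inner_discLap,
    Finset.sum_congr rfl fun κ _ => fdiff_inner_expand κ u w,
    Finset.sum_sub_distrib, Finset.sum_const, Finset.card_univ]
  simp only [Fintype.card_fin, nsmul_eq_mul]
  ring

open Filter Asymptotics in
lemma hasDeriv_P {N : ℕ} (σ : ℝ) (hσ : 0 < σ) (φ φ' : ℝ → ellTwo N) (s : Set ℝ) (t : ℝ)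
    (hφ : HasDerivWithinAt φ (φ' t) s t) :
    HasDerivWithinAt (fun r => ∑' n, |(φ r) n| ^ (2 * σ + 2))
      ((2 * σ + 2) * ⟪Fpow σ hσ.le (φ t), φ' t⟫_ℝ) s t := by
  set F : ellTwo N := Fpow σ hσ.le (φ t) with hF
  set L : ℝ := (2 * σ + 2) * ⟪F, φ' t⟫_ℝ with hL
  -- the linear part
  have h1 : HasDerivWithinAt (fun r => (2 * σ + 2) * ⟪F, φ r⟫_ℝ) L s t := by
    have := ((hasDerivWithinAt_const t s F).inner ℝ hφ).const_mul (2 * σ + 2)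
    simpa [hL] using this
  rw [hasDerivWithinAt_iff_isLittleO] at h1 ⊢
  have hdecomp : (fun r => (∑' n, |(φ r) n| ^ (2 * σ + 2)) - (∑' n, |(φ t) n| ^ (2 * σ + 2))
        - (r - t) • L)
      = (fun r => ((2 * σ + 2) * ⟪F, φ r⟫_ℝ - (2 * σ + 2) * ⟪F, φ t⟫_ℝ - (r - t) • L)
          + ((∑' n, |(φ r) n| ^ (2 * σ + 2)) - (∑' n, |(φ t) n| ^ (2 * σ + 2))
              - (2 * σ + 2) * ⟪F, φ r - φ t⟫_ℝ)) := by
    funext r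
    rw [inner_sub_right]
    ring
  rw [hdecomp]
  refine h1.add ?_
  -- the quadratic remainder
  set K : ℝ := (2 * σ + 2) * (2 * σ + 1) * (2 * ‖φ t‖ + 1) ^ (2 * σ) * (‖φ' t‖ + 1) ^ 2 with hK
  have hKnn : 0 ≤ K := by rw [hK]; positivity
  rw [isLittleO_iff]
  intro c hc
  -- eventually ‖φ r - φ t‖ ≤ (‖φ' t‖ + 1) * |r - t|
  have hlip : ∀ᶠ r in nhdsWithin t s, ‖φ r - φ t‖ ≤ (‖φ' t‖ + 1) * |r - t| := by
    have hev := (hasDerivWithinAt_iff_isLittleO.mp hφ).def one_pos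
    filter_upwards [hev] with r hr
    have htri : ‖φ r - φ t‖ ≤ ‖φ r - φ t - (r - t) • φ' t‖ + ‖(r - t) • φ' t‖ := by
      have := norm_add_le (φ r - φ t - (r - t) • φ' t) ((r - t) • φ' t)
      simpa using this
    rw [norm_smul, Real.norm_eq_abs] at htri
    rw [Real.norm_eq_abs] at hr
    calc ‖φ r - φ t‖ ≤ 1 * |r - t| + |r - t| * ‖φ' t‖ := by
          refine htri.trans (add_le_add hr le_rfl)
    _ = (‖φ' t‖ + 1) * |r - t| := by ring
  -- eventually ‖φ r‖ ≤ ‖φ t‖ + 1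
  have hnorm : ∀ᶠ r in nhdsWithin t s, ‖φ r‖ ≤ ‖φ t‖ + 1 := by
    have hcont : Filter.Tendsto φ (nhdsWithin t s) (nhds (φ t)) := hφ.continuousWithinAt
    have := hcont.norm.eventually_le_const (by linarith : ‖φ t‖ < ‖φ t‖ + 1)
    exact this
  -- eventually K * |r - t| < c
  have hsmall : ∀ᶠ r in nhdsWithin t s, K * |r - t| < c := by
    have htend : Filter.Tendsto (fun r => K * |r - t|) (nhdsWithin t s) (nhds 0) := by
      have h0 : Filter.Tendsto (fun r : ℝ => K * |r - t|) (nhds t) (nhds (K * |t - t|)) := by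
        apply Filter.Tendsto.const_mul
        exact ((continuous_id.sub continuous_const).abs.tendsto t)
      simpa using h0.mono_left nhdsWithin_le_nhds
    exact htend.eventually_lt_const hc
  filter_upwards [hlip, hnorm, hsmall] with r hr1 hr2 hr3
  have hest := P_est σ hσ (φ r) (φ t)
  have hmono : (2 * σ + 2) * (2 * σ + 1) * (‖φ r‖ + ‖φ t‖) ^ (2 * σ) * ‖φ r - φ t‖ ^ 2
      ≤ (2 * σ + 2) * (2 * σ + 1) * (2 * ‖φ t‖ + 1) ^ (2 * σ) * ((‖φ' t‖ + 1) * |r - t|) ^ 2 := by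
    have e1 : (‖φ r‖ + ‖φ t‖) ^ (2 * σ) ≤ (2 * ‖φ t‖ + 1) ^ (2 * σ) :=
      Real.rpow_le_rpow (by positivity) (by linarith) (by positivity)
    have e2 : ‖φ r - φ t‖ ^ 2 ≤ ((‖φ' t‖ + 1) * |r - t|) ^ 2 := by
      apply pow_le_pow_left₀ (norm_nonneg _) hr1
    have e3 : (0:ℝ) ≤ (2 * σ + 2) * (2 * σ + 1) := by positivity
    have e4 : (0:ℝ) ≤ (‖φ r‖ + ‖φ t‖) ^ (2 * σ) := by positivity
    nlinarith [mul_le_mul e1 e2 (by positivity) (by positivity)]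
  rw [Real.norm_eq_abs, Real.norm_eq_abs]
  calc |(∑' n, |(φ r) n| ^ (2 * σ + 2)) - (∑' n, |(φ t) n| ^ (2 * σ + 2))
        - (2 * σ + 2) * ⟪F, φ r - φ t⟫_ℝ| ≤ _ := hest
  _ ≤ (2 * σ + 2) * (2 * σ + 1) * (2 * ‖φ t‖ + 1) ^ (2 * σ) * ((‖φ' t‖ + 1) * |r - t|) ^ 2 := hmono
  _ = (K * |r - t|) * |r - t| := by rw [hK]; ring
  _ ≤ c * |r - t| := by
      apply mul_le_mul_of_nonneg_right hr3.le (abs_nonneg _)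

def fdiffCLM {N : ℕ} (κ : Fin N) : ellTwo N →L[ℝ] ellTwo N :=
  shiftCLM (evec N κ) - ContinuousLinearMap.id ℝ (ellTwo N)

lemma fdiffCLM_apply {N : ℕ} (κ : Fin N) (u : ellTwo N) : fdiffCLM κ u = fdiff κ u := rfl

/-- The Hamiltonian (total energy)
`H(t) = ½‖φ̇(t)‖² + ½(Σ_κ ‖∇⁺_κ φ(t)‖² + m‖φ(t)‖²) - (1/(2σ+2)) Σ_n |φ_n(t)|^{2σ+2}`. -/
def energyH {N : ℕ} (σ m : ℝ) (φ φ' : ℝ → ellTwo N) (t : ℝ) : ℝ :=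
  1/2 * ‖φ' t‖ ^ 2
    + 1/2 * (∑ κ : Fin N, ‖fdiff κ (φ t)‖ ^ 2 + m * ‖φ t‖ ^ 2)
    - (1/(2*σ+2)) * ∑' n : ZLat N, |(φ t) n| ^ (2*σ+2)

section Main

variable {N : ℕ} {σ m T : ℝ}

lemma norm_sq_deriv {f : ℝ → ellTwo N} {v : ellTwo N} {s : Set ℝ} {t : ℝ}
    (hf : HasDerivWithinAt f v s t) :
    HasDerivWithinAt (fun r => ‖f r‖ ^ 2) (2 * ⟪f t, v⟫_ℝ) s t := by
  have h := hf.inner ℝ hf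
  have h2 : HasDerivWithinAt (fun r => ⟪f r, f r⟫_ℝ) (2 * ⟪f t, v⟫_ℝ) s t := by
    refine h.congr_deriv ?_
    linarith [real_inner_comm v (f t), real_inner_comm (f t) v]
  exact h2.congr (fun r _ => (real_inner_self_eq_norm_sq (f r)).symm)
    (real_inner_self_eq_norm_sq (f t)).symm

lemma energy_deriv (hσ : 0 < σ) (φ φ' φ'' : ℝ → ellTwo N)
    (hd1 : ∀ t ∈ Set.Icc (0:ℝ) T, HasDerivWithinAt φ (φ' t) (Set.Icc (0:ℝ) T) t)
    (hd2 : ∀ t ∈ Set.Icc (0:ℝ) T, HasDerivWithinAt φ' (φ'' t) (Set.Icc (0:ℝ) T) t)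
    (heq : ∀ t ∈ Set.Icc (0:ℝ) T,
      φ'' t - discLap (φ t) + m • φ t - Fpow σ hσ.le (φ t) = 0)
    {t : ℝ} (ht : t ∈ Set.Icc (0:ℝ) T) :
    HasDerivWithinAt (energyH σ m φ φ') 0 (Set.Icc (0:ℝ) T) t := by
  set s := Set.Icc (0:ℝ) T
  have hv : φ'' t = discLap (φ t) - m • φ t + Fpow σ hσ.le (φ t) := by
    have h := heq t ht
    have h2 : φ'' t - (discLap (φ t) - m • φ t + Fpow σ hσ.le (φ t))
        = φ'' t - discLap (φ t) + m • φ t - Fpow σ hσ.le (φ t) := by abel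
    exact sub_eq_zero.mp (h2.trans h)
  have hA : HasDerivWithinAt (fun r => ‖φ' r‖ ^ 2) (2 * ⟪φ' t, φ'' t⟫_ℝ) s t :=
    norm_sq_deriv (hd2 t ht)
  have hfd : ∀ κ : Fin N, HasDerivWithinAt (fun r => fdiff κ (φ r)) (fdiff κ (φ' t)) s t := by
    intro κ
    have := ((fdiffCLM κ).hasFDerivAt (x := φ t)).comp_hasDerivWithinAt t (hd1 t ht)
    exact this.congr (fun r _ => (fdiffCLM_apply κ (φ r)).symm) (fdiffCLM_apply κ (φ t)).symm
  have hB : HasDerivWithinAt (fun r => ∑ κ : Fin N, ‖fdiff κ (φ r)‖ ^ 2)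
      (∑ κ : Fin N, 2 * ⟪fdiff κ (φ t), fdiff κ (φ' t)⟫_ℝ) s t :=
    HasDerivWithinAt.fun_sum (fun κ _ => norm_sq_deriv (hfd κ))
  have hC : HasDerivWithinAt (fun r => ‖φ r‖ ^ 2) (2 * ⟪φ t, φ' t⟫_ℝ) s t :=
    norm_sq_deriv (hd1 t ht)
  have hP : HasDerivWithinAt (fun r => ∑' n : ZLat N, |(φ r) n| ^ (2 * σ + 2))
      ((2 * σ + 2) * ⟪Fpow σ hσ.le (φ t), φ' t⟫_ℝ) s t :=
    hasDeriv_P σ hσ φ φ' s t (hd1 t ht)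
  have hcomb := ((hA.const_mul (1/2 : ℝ)).add
      (((hB.add (hC.const_mul m)).const_mul (1/2 : ℝ)))).sub
      (hP.const_mul (1/(2*σ+2) : ℝ))
  have hzero : 1/2 * (2 * ⟪φ' t, φ'' t⟫_ℝ)
      + 1/2 * ((∑ κ : Fin N, 2 * ⟪fdiff κ (φ t), fdiff κ (φ' t)⟫_ℝ) + m * (2 * ⟪φ t, φ' t⟫_ℝ))
      - (1/(2*σ+2)) * ((2 * σ + 2) * ⟪Fpow σ hσ.le (φ t), φ' t⟫_ℝ) = 0 := by
    have hsp : ∑ κ : Fin N, ⟪fdiff κ (φ t), fdiff κ (φ' t)⟫_ℝ = -⟪discLap (φ t), φ' t⟫_ℝ :=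
      sum_by_parts (φ t) (φ' t)
    have hsum2 : ∑ κ : Fin N, 2 * ⟪fdiff κ (φ t), fdiff κ (φ' t)⟫_ℝ
        = -(2 * ⟪discLap (φ t), φ' t⟫_ℝ) := by
      rw [← Finset.mul_sum, hsp]; ring
    have hIP : ⟪φ' t, φ'' t⟫_ℝ = ⟪discLap (φ t), φ' t⟫_ℝ - m * ⟪φ t, φ' t⟫_ℝ
        + ⟪Fpow σ hσ.le (φ t), φ' t⟫_ℝ := by
      rw [hv, inner_add_right, inner_sub_right, real_inner_smul_right,
        real_inner_comm (φ' t) (discLap (φ t)), real_inner_comm (φ' t) (φ t),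
        real_inner_comm (φ' t) (Fpow σ hσ.le (φ t))]
    rw [hsum2, hIP]
    have h2σ : (2*σ+2) ≠ 0 := by positivity
    field_simp
    ring
  have hfun : energyH σ m φ φ' = fun r =>
      1/2 * ‖φ' r‖ ^ 2
        + 1/2 * (∑ κ : Fin N, ‖fdiff κ (φ r)‖ ^ 2 + m * ‖φ r‖ ^ 2)
        - (1/(2*σ+2)) * ∑' n : ZLat N, |(φ r) n| ^ (2*σ+2) := rfl
  rw [hfun, ← hzero]
  exact hcomb

end Main


set_option maxHeartbeats 1000000 in
/-- For a solution of the conservative DKG equation `φ̈ - Δ_d φ + m φ - F(φ) = 0` with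
nonpositive initial energy and `φ(t) ≠ 0`, the function `μ(t) = ‖φ(t)‖²` is twice
continuously differentiable and satisfies `μ″ μ ≥ ((σ+2)/2)(μ′)²` on `[0,T]`. -/
theorem dkg_mu_differential_inequality (N : ℕ) (σ m T : ℝ) (hσ : 0 < σ) (hm : 0 < m)
    (hT : 0 < T) (φ φ' φ'' : ℝ → ellTwo N)
    (hd1 : ∀ t ∈ Set.Icc (0:ℝ) T, HasDerivWithinAt φ (φ' t) (Set.Icc (0:ℝ) T) t)
    (hd2 : ∀ t ∈ Set.Icc (0:ℝ) T, HasDerivWithinAt φ' (φ'' t) (Set.Icc (0:ℝ) T) t)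
    (hcont : ContinuousOn φ'' (Set.Icc (0:ℝ) T))
    (heq : ∀ t ∈ Set.Icc (0:ℝ) T,
      φ'' t - discLap (φ t) + m • φ t - Fpow σ hσ.le (φ t) = 0)
    (hH0 : energyH σ m φ φ' 0 ≤ 0)
    (hne : ∀ t ∈ Set.Icc (0:ℝ) T, φ t ≠ 0) :
    ∃ μ' μ'' : ℝ → ℝ,
      (∀ t ∈ Set.Icc (0:ℝ) T,
        HasDerivWithinAt (fun s => ‖φ s‖ ^ 2) (μ' t) (Set.Icc (0:ℝ) T) t) ∧
      (∀ t ∈ Set.Icc (0:ℝ) T, HasDerivWithinAt μ' (μ'' t) (Set.Icc (0:ℝ) T) t) ∧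
      ContinuousOn μ'' (Set.Icc (0:ℝ) T) ∧
      ∀ t ∈ Set.Icc (0:ℝ) T, (σ+2)/2 * (μ' t) ^ 2 ≤ μ'' t * ‖φ t‖ ^ 2 := by
  refine ⟨fun t => 2 * ⟪φ t, φ' t⟫_ℝ, fun t => 2 * (⟪φ' t, φ' t⟫_ℝ + ⟪φ t, φ'' t⟫_ℝ),
    fun t ht => norm_sq_deriv (hd1 t ht), ?_, ?_, ?_⟩
  · -- second derivative
    intro t ht
    have h := ((hd1 t ht).inner ℝ (hd2 t ht)).const_mul (2:ℝ)
    refine h.congr_deriv ?_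
    ring
  · -- continuity of μ''
    have hc1 : ContinuousOn φ (Set.Icc (0:ℝ) T) := fun t ht => (hd1 t ht).continuousWithinAt
    have hc2 : ContinuousOn φ' (Set.Icc (0:ℝ) T) := fun t ht => (hd2 t ht).continuousWithinAt
    exact (continuousOn_const.mul ((hc2.inner hc2).add (hc1.inner hcont)))
  · -- the differential inequality
    -- energy is conserved
    have hE : ∀ t ∈ Set.Icc (0:ℝ) T,
        HasDerivWithinAt (energyH σ m φ φ') 0 (Set.Icc (0:ℝ) T) t :=
      fun t ht => energy_deriv hσ φ φ' φ'' hd1 hd2 heq ht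
    have hEcont : ContinuousOn (energyH σ m φ φ') (Set.Icc (0:ℝ) T) :=
      fun t ht => (hE t ht).continuousWithinAt
    have hEconst : ∀ t ∈ Set.Icc (0:ℝ) T, energyH σ m φ φ' t ≤ 0 := by
      intro t ht
      have hder : ∀ x ∈ Set.Ico (0:ℝ) T,
          HasDerivWithinAt (energyH σ m φ φ') 0 (Set.Ici x) x := by
        intro x hx
        have h1 := (hE x ⟨hx.1, hx.2.le⟩).mono (Set.Icc_subset_Icc_left hx.1)
        refine h1.mono_of_mem_nhdsWithin ?_
        rw [← nhdsWithin_Icc_eq_nhdsGE hx.2]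
        exact self_mem_nhdsWithin
      have := constant_of_has_deriv_right_zero hEcont hder t ht
      rw [this]
      exact hH0
    intro t ht
    beta_reduce
    set u := φ t
    set u' := φ' t
    have hv : φ'' t = discLap u - m • u + Fpow σ hσ.le u := by
      have h := heq t ht
      have h2 : φ'' t - (discLap (φ t) - m • φ t + Fpow σ hσ.le (φ t))
          = φ'' t - discLap (φ t) + m • φ t - Fpow σ hσ.le (φ t) := by abel
      exact sub_eq_zero.mp (h2.trans h)
    set A : ℝ := ‖u'‖ ^ 2 with hAdef
    set B : ℝ := ∑ κ : Fin N, ‖fdiff κ u‖ ^ 2 with hBdef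
    set Cm : ℝ := m * ‖u‖ ^ 2 with hCdef
    set Pt : ℝ := ∑' n : ZLat N, |u n| ^ (2 * σ + 2) with hPdef
    -- inner products
    have hlap : ⟪u, discLap u⟫_ℝ = -B := by
      have hsp := sum_by_parts u u
      have : ∑ κ : Fin N, ⟪fdiff κ u, fdiff κ u⟫_ℝ = B := by
        rw [hBdef]
        exact Finset.sum_congr rfl fun κ _ => real_inner_self_eq_norm_sq _
      rw [this] at hsp
      rw [real_inner_comm]
      linarith
    have hFu : ⟪u, Fpow σ hσ.le u⟫_ℝ = Pt := inner_Fpow σ hσ u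
    have huu'' : ⟪u, φ'' t⟫_ℝ = -B - Cm + Pt := by
      rw [hv, inner_add_right, inner_sub_right, real_inner_smul_right, hlap, hFu,
        real_inner_self_eq_norm_sq, hCdef]
      try ring
    -- energy inequality
    have hEt := hEconst t ht
    have hEt' : 1/2 * A + 1/2 * (B + Cm) - (1/(2*σ+2)) * Pt ≤ 0 := hEt
    have hPt : (σ + 1) * (A + B + Cm) ≤ Pt := by
      have hp : (0:ℝ) < 2*σ+2 := by linarith
      have h1 : 1/2 * A + 1/2 * (B + Cm) ≤ (1/(2*σ+2)) * Pt := by linarith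
      calc (σ+1) * (A + B + Cm) = (2*σ+2) * (1/2 * A + 1/2 * (B + Cm)) := by ring
      _ ≤ (2*σ+2) * ((1/(2*σ+2)) * Pt) := mul_le_mul_of_nonneg_left h1 hp.le
      _ = Pt := by field_simp
    have hBnn : 0 ≤ B := Finset.sum_nonneg fun κ _ => sq_nonneg _
    have hCnn : 0 ≤ Cm := by rw [hCdef]; positivity
    have hAnn : 0 ≤ A := sq_nonneg _
    have hcs : ⟪u, u'⟫_ℝ ^ 2 ≤ A * ‖u‖ ^ 2 := by
      have h1 := abs_real_inner_le_norm u u'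
      have h2 : |⟪u, u'⟫_ℝ| ^ 2 ≤ (‖u‖ * ‖u'‖) ^ 2 :=
        pow_le_pow_left₀ (abs_nonneg _) h1 2
      rw [sq_abs] at h2
      rw [hAdef]
      nlinarith [h2]
    have hinner' : ⟪u', u'⟫_ℝ = A := real_inner_self_eq_norm_sq u'
    have hmu'' : 2 * (⟪u', u'⟫_ℝ + ⟪u, φ'' t⟫_ℝ) = 2 * (A - B - Cm + Pt) := by
      rw [hinner', huu'']; ring
    clear_value u u' A B Cm Pt
    rw [hmu'']
    have hfinal : (2*σ+4) * A ≤ 2 * (A - B - Cm + Pt) := by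
      nlinarith [hPt, mul_nonneg hσ.le hBnn, mul_nonneg hσ.le hCnn]
    nlinarith [mul_le_mul_of_nonneg_right hfinal (sq_nonneg ‖u‖),
      mul_le_mul_of_nonneg_left hcs (by linarith : (0:ℝ) ≤ 2*σ+4)]
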